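/- Let n ≥ 1, a < b, c ∈ [a, b], E ∈ ℝ, and let V : ℝ → Matrix (Fin n) (Fin n) ℝ be continuous with V(x) symmetric for all x. Let A₁, A₂, B₁, B₂ be real n×n matrices with A₁·A₂ᵀ = A₂·A₁ᵀ, B₁·B₂ᵀ = B₂·B₁ᵀ, and such that the only v ∈ ℝⁿ with A₁ᵀ·v = 0 and A₂ᵀ·v = 0 is v = 0, and the only v ∈ ℝⁿ with B₁ᵀ·v = 0 and B₂ᵀ·v = 0 is v = 0. Let Y_L, Y_R solve the matrix ODE Y'' = (V − E·I)Y with Y_L(a) = A₂ᵀ, Y_L'(a) = −A₁ᵀ, Y_R(b) = B₂ᵀ, Y_R'(b) = −B₁ᵀ, assume Y_L'(c) and Y_R'(c) are invertible, and set Ψ_L(c) = Y_L(c)·(Y_L'(c))⁻¹, Ψ_R(c) = Y_R(c)·(Y_R'(c))⁻¹. Then the linear map sending a solution y of the boundary value problem (i.e. a twice differentiable y with y'' = (V − E·I)·y on [a,b] satisfying both boundary conditions) to the vector y'(c) ∈ ℝⁿ is an injective linear map whose range is exactly the kernel of the matrix Ψ_L(c) − Ψ_R(c); in particular, the multiplicity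 of E (the dimension of the space of solutions of the boundary value problem) equals the dimension of the kernel of Ψ_L(c) − Ψ_R(c). -/

import Mathlib

attribute [local instance] Matrix.normedAddCommGroup Matrix.normedSpace

open scoped Matrix
open Set Module

section AuxLemmas

lemma aux_bc_rep {n : ℕ} (A₁ A₂ : Matrix (Fin n) (Fin n) ℝ)
    (hA : A₁ * A₂ᵀ = A₂ * A₁ᵀ)
    (hArank : ∀ v : Fin n → ℝ, A₁ᵀ.mulVec v = 0 → A₂ᵀ.mulVec v = 0 → v = 0)
    (u w : Fin n → ℝ) (h : A₁.mulVec u + A₂.mulVec w = 0) :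
    ∃ v, u = A₂ᵀ.mulVec v ∧ w = -(A₁ᵀ.mulVec v) := by
  classical
  set C : Matrix (Fin n) (Fin n ⊕ Fin n) ℝ := Matrix.fromCols A₁ A₂ with hC
  set D : Matrix (Fin n ⊕ Fin n) (Fin n) ℝ := Matrix.fromRows A₂ᵀ (-A₁ᵀ) with hD
  have hCD : C * D = 0 := by
    rw [hC, hD, Matrix.fromCols_mul_fromRows]
    simp [hA]
  have hDinj : Function.Injective D.mulVecLin := by
    rw [← LinearMap.ker_eq_bot, LinearMap.ker_eq_bot']
    intro v hv
    simp only [Matrix.mulVecLin_apply, hD, Matrix.fromRows_mulVec] at hv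
    have h1 : A₂ᵀ.mulVec v = 0 := by
      funext i; exact congrFun hv (Sum.inl i)
    have h2 : (-A₁ᵀ).mulVec v = 0 := by
      funext i; exact congrFun hv (Sum.inr i)
    rw [Matrix.neg_mulVec, neg_eq_zero] at h2
    exact hArank v h2 h1
  have hCtinj : Function.Injective Cᵀ.mulVecLin := by
    rw [← LinearMap.ker_eq_bot, LinearMap.ker_eq_bot']
    intro v hv
    simp only [Matrix.mulVecLin_apply, hC, Matrix.transpose_fromCols,
      Matrix.fromRows_mulVec] at hv
    have h1 : A₁ᵀ.mulVec v = 0 := by funext i; exact congrFun hv (Sum.inl i)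
    have h2 : A₂ᵀ.mulVec v = 0 := by funext i; exact congrFun hv (Sum.inr i)
    exact hArank v h1 h2
  -- ranks
  have hrankCt : Cᵀ.rank = n := by
    have := LinearMap.finrank_range_add_finrank_ker Cᵀ.mulVecLin
    rw [LinearMap.ker_eq_bot.mpr hCtinj] at this
    simpa [Matrix.rank] using this
  have hrankC : C.rank = n := by rw [← Matrix.rank_transpose, hrankCt]
  have hrankD : finrank ℝ (LinearMap.range D.mulVecLin) = n := by
    have := LinearMap.finrank_range_add_finrank_ker D.mulVecLin
    rw [LinearMap.ker_eq_bot.mpr hDinj] at this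
    simpa using this
  have hkerC : finrank ℝ (LinearMap.ker C.mulVecLin) = n := by
    have := LinearMap.finrank_range_add_finrank_ker C.mulVecLin
    have hdom : finrank ℝ (Fin n ⊕ Fin n → ℝ) = n + n := by
      simp [finrank_pi]
    rw [hdom] at this
    have : C.rank + finrank ℝ (LinearMap.ker C.mulVecLin) = n + n := this
    omega
  have hle : LinearMap.range D.mulVecLin ≤ LinearMap.ker C.mulVecLin := by
    rintro p ⟨v, rfl⟩
    simp only [LinearMap.mem_ker, Matrix.mulVecLin_apply, Matrix.mulVec_mulVec, hCD,
      Matrix.zero_mulVec]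
  have heq : LinearMap.range D.mulVecLin = LinearMap.ker C.mulVecLin :=
    Submodule.eq_of_le_of_finrank_eq hle (by rw [hrankD, hkerC])
  have hmem : Sum.elim u w ∈ LinearMap.ker C.mulVecLin := by
    simp only [LinearMap.mem_ker, Matrix.mulVecLin_apply, hC,
      Matrix.fromCols_mulVec_sumElim, h]
  rw [← heq] at hmem
  obtain ⟨v, hv⟩ := hmem
  simp only [Matrix.mulVecLin_apply, hD, Matrix.fromRows_mulVec] at hv
  refine ⟨v, ?_, ?_⟩
  · funext i
    have := congrFun hv (Sum.inl i)
    simpa using this.symm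
  · funext i
    have := congrFun hv (Sum.inr i)
    simpa [Matrix.neg_mulVec] using this.symm


lemma aux_hasDerivAt_mulVec {n : ℕ} {Y : ℝ → Matrix (Fin n) (Fin n) ℝ}
    {Y' : Matrix (Fin n) (Fin n) ℝ} {x : ℝ}
    (hY : HasDerivAt Y Y' x) (v : Fin n → ℝ) :
    HasDerivAt (fun t => (Y t).mulVec v) (Y'.mulVec v) x := by
  let L : Matrix (Fin n) (Fin n) ℝ →ₗ[ℝ] (Fin n → ℝ) :=
    { toFun := fun M => M.mulVec v
      map_add' := fun M N => Matrix.add_mulVec M N v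
      map_smul' := fun c M => by
        simp [Matrix.smul_mulVec] }
  exact (L.toContinuousLinearMap.hasFDerivAt.comp_hasDerivAt x hY)

lemma aux_ode_unique {n : ℕ} {a b t₀ : ℝ} (hab : a ≤ b) (ht₀ : t₀ ∈ Icc a b)
    {M : ℝ → Matrix (Fin n) (Fin n) ℝ} (hM : Continuous M)
    {y y₁ z z₁ : ℝ → Fin n → ℝ}
    (hy : ∀ x, HasDerivAt y (y₁ x) x)
    (hy₁ : ∀ x ∈ Icc a b, HasDerivAt y₁ ((M x).mulVec (y x)) x)
    (hz : ∀ x, HasDerivAt z (z₁ x) x)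
    (hz₁ : ∀ x ∈ Icc a b, HasDerivAt z₁ ((M x).mulVec (z x)) x)
    (h0 : y t₀ = z t₀) (h1 : y₁ t₀ = z₁ t₀) :
    ∀ x ∈ Icc a b, y x = z x ∧ y₁ x = z₁ x := by
  classical
  set ρ : ℝ → ℝ := fun t => max a (min b t) with hρdef
  have hρc : Continuous ρ := continuous_const.max (continuous_const.min continuous_id)
  have hρmem : ∀ t, ρ t ∈ Icc a b := fun t =>
    ⟨le_max_left _ _, max_le hab (min_le_left _ _)⟩
  have hρeq : ∀ t ∈ Icc a b, ρ t = t := fun t ht => by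
    rw [hρdef]; simp only; rw [min_eq_right ht.2, max_eq_right ht.1]
  -- matrix to CLM
  let Φ : Matrix (Fin n) (Fin n) ℝ →ₗ[ℝ] ((Fin n → ℝ) →L[ℝ] (Fin n → ℝ)) :=
    { toFun := fun A => LinearMap.toContinuousLinearMap A.mulVecLin
      map_add' := fun A B => by
        ext v
        simp [Matrix.add_mulVec]
      map_smul' := fun c A => by
        ext v
        simp [Matrix.smul_mulVec] }
  have hΦc : Continuous Φ := Φ.continuous_of_finiteDimensional
  set L : ℝ → ((Fin n → ℝ) →L[ℝ] (Fin n → ℝ)) := fun t => Φ (M (ρ t)) with hLdef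
  obtain ⟨C, hC⟩ := (isCompact_Icc (a := a) (b := b)).exists_bound_of_continuousOn
    ((hΦc.comp hM).continuousOn)
  set K : NNReal := 1 + Real.toNNReal C with hK
  set v : ℝ → ((Fin n → ℝ) × (Fin n → ℝ)) → ((Fin n → ℝ) × (Fin n → ℝ)) :=
    fun t p => (p.2, L t p.1) with hv
  have hlip : ∀ t, LipschitzWith K (v t) := by
    intro t
    have l1 : LipschitzWith 1 (fun p : (Fin n → ℝ) × (Fin n → ℝ) => p.2) :=
      LipschitzWith.prod_snd
    have l2 : LipschitzWith (‖L t‖₊ * 1) (fun p : (Fin n → ℝ) × (Fin n → ℝ) => L t p.1) :=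
      (L t).lipschitz.comp LipschitzWith.prod_fst
    have := l1.prodMk l2
    apply this.weaken
    apply max_le
    · simp [hK]
    · rw [mul_one]
      have h2 : ‖L t‖ ≤ C := hC _ (hρmem t)
      have h3 : ‖L t‖₊ ≤ Real.toNNReal C := by
        have : Real.toNNReal ‖L t‖ ≤ Real.toNNReal C := Real.toNNReal_mono h2
        simpa [Real.toNNReal_eq_nnnorm_of_nonneg (norm_nonneg _)] using this
      exact h3.trans (by simp [hK])
  set F : ℝ → (Fin n → ℝ) × (Fin n → ℝ) := fun x => (y x, y₁ x) with hF
  set G : ℝ → (Fin n → ℝ) × (Fin n → ℝ) := fun x => (z x, z₁ x) with hG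
  have hkey : ∀ p : ℝ → Fin n → ℝ, ∀ p₁ : ℝ → Fin n → ℝ, ∀ x ∈ Icc a b,
      v x (p x, p₁ x) = (p₁ x, (M x).mulVec (p x)) := by
    intro p p₁ x hx
    simp only [hv, hLdef, hρeq x hx, Φ, LinearMap.coe_mk, AddHom.coe_mk,
      LinearMap.coe_toContinuousLinearMap', Matrix.mulVecLin_apply]
  have hFc : ContinuousOn F (Icc a b) := by
    apply ContinuousOn.prodMk
    · exact fun x _ => (hy x).continuousAt.continuousWithinAt
    · exact fun x hx => (hy₁ x hx).continuousAt.continuousWithinAt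
  have hGc : ContinuousOn G (Icc a b) := by
    apply ContinuousOn.prodMk
    · exact fun x _ => (hz x).continuousAt.continuousWithinAt
    · exact fun x hx => (hz₁ x hx).continuousAt.continuousWithinAt
  have hF' : ∀ x ∈ Icc a b, HasDerivAt F (v x (F x)) x := by
    intro x hx
    rw [hF]; simp only
    rw [show v x (F x) = (y₁ x, (M x).mulVec (y x)) from hkey y y₁ x hx]
    exact (hy x).prodMk (hy₁ x hx)
  have hG' : ∀ x ∈ Icc a b, HasDerivAt G (v x (G x)) x := by
    intro x hx
    rw [hG]; simp only
    rw [show v x (G x) = (z₁ x, (M x).mulVec (z x)) from hkey z z₁ x hx]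
    exact (hz x).prodMk (hz₁ x hx)
  have ht0eq : F t₀ = G t₀ := by rw [hF, hG]; simp only; rw [h0, h1]
  have hlipOn : ∀ t, LipschitzOnWith K (v t) (univ : Set ((Fin n → ℝ) × (Fin n → ℝ))) :=
    fun t => (hlip t).lipschitzOnWith
  have hright : EqOn F G (Icc t₀ b) := by
    apply ODE_solution_unique_of_mem_Icc_right (fun t _ => hlipOn t)
      (hFc.mono (Icc_subset_Icc_left ht₀.1)) ?_ (fun _ _ => mem_univ _)
      (hGc.mono (Icc_subset_Icc_left ht₀.1)) ?_ (fun _ _ => mem_univ _) ht0eq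
    · intro t ht
      exact (hF' t ⟨le_trans ht₀.1 ht.1, le_of_lt ht.2⟩).hasDerivWithinAt
    · intro t ht
      exact (hG' t ⟨le_trans ht₀.1 ht.1, le_of_lt ht.2⟩).hasDerivWithinAt
  have hleft : EqOn F G (Icc a t₀) := by
    apply ODE_solution_unique_of_mem_Icc_left (fun t _ => hlipOn t)
      (hFc.mono (Icc_subset_Icc_right ht₀.2)) ?_ (fun _ _ => mem_univ _)
      (hGc.mono (Icc_subset_Icc_right ht₀.2)) ?_ (fun _ _ => mem_univ _) ht0eq
    · intro t ht
      exact (hF' t ⟨le_of_lt ht.1, le_trans ht.2 ht₀.2⟩).hasDerivWithinAt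
    · intro t ht
      exact (hG' t ⟨le_of_lt ht.1, le_trans ht.2 ht₀.2⟩).hasDerivWithinAt
  intro x hx
  have hFG : F x = G x := by
    rcases le_total x t₀ with h | h
    · exact hleft ⟨hx.1, h⟩
    · exact hright ⟨h, hx.2⟩
  exact ⟨congrArg Prod.fst hFG, congrArg Prod.snd hFG⟩

end AuxLemmas

/-- `y` (with first derivative `y₁`) is a solution of the coupled-channel
boundary value problem on `[a,b]`. -/
def IsBVPSolution (n : ℕ) (a b E : ℝ) (V : ℝ → Matrix (Fin n) (Fin n) ℝ)
    (A₁ A₂ B₁ B₂ : Matrix (Fin n) (Fin n) ℝ) (y y₁ : ℝ → Fin n → ℝ) : Prop :=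
  (∀ x, HasDerivAt y (y₁ x) x) ∧
  (∀ x ∈ Icc a b,
    HasDerivAt y₁ ((V x - E • (1 : Matrix (Fin n) (Fin n) ℝ)).mulVec (y x)) x) ∧
  A₁.mulVec (y a) + A₂.mulVec (y₁ a) = 0 ∧
  B₁.mulVec (y b) + B₂.mulVec (y₁ b) = 0

/-- The map sending a solution `y` of the boundary value problem to `y'(c)`
is injective (solutions agreeing at `c` coincide on `[a,b]`), its range is
exactly the kernel of the matching matrix `Ψ_L(c) - Ψ_R(c)`, and hence the
dimension of the space of solutions (the multiplicity of `E`) equals the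
dimension of the kernel of `Ψ_L(c) - Ψ_R(c)`. -/
theorem deriv_at_c_injective_range_ker (n : ℕ) (hn : 1 ≤ n) (a b c E : ℝ)
    (hab : a < b) (hc : c ∈ Icc a b)
    (V : ℝ → Matrix (Fin n) (Fin n) ℝ)
    (hVcont : Continuous V) (hVsymm : ∀ x, (V x)ᵀ = V x)
    (A₁ A₂ B₁ B₂ : Matrix (Fin n) (Fin n) ℝ)
    (hA : A₁ * A₂ᵀ = A₂ * A₁ᵀ) (hB : B₁ * B₂ᵀ = B₂ * B₁ᵀ)
    (hArank : ∀ v : Fin n → ℝ, A₁ᵀ.mulVec v = 0 → A₂ᵀ.mulVec v = 0 → v = 0)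
    (hBrank : ∀ v : Fin n → ℝ, B₁ᵀ.mulVec v = 0 → B₂ᵀ.mulVec v = 0 → v = 0)
    (YL YL₁ YR YR₁ : ℝ → Matrix (Fin n) (Fin n) ℝ)
    (hYL : ∀ x, HasDerivAt YL (YL₁ x) x)
    (hYL₁ : ∀ x, HasDerivAt YL₁ ((V x - E • (1 : Matrix (Fin n) (Fin n) ℝ)) * YL x) x)
    (hYR : ∀ x, HasDerivAt YR (YR₁ x) x)
    (hYR₁ : ∀ x, HasDerivAt YR₁ ((V x - E • (1 : Matrix (Fin n) (Fin n) ℝ)) * YR x) x)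
    (hYLa : YL a = A₂ᵀ) (hYL₁a : YL₁ a = -A₁ᵀ)
    (hYRb : YR b = B₂ᵀ) (hYR₁b : YR₁ b = -B₁ᵀ)
    (hLc : IsUnit (YL₁ c)) (hRc : IsUnit (YR₁ c)) :
    -- injectivity of the map (solution y) ↦ y'(c)
    (∀ y y₁ z z₁ : ℝ → Fin n → ℝ,
        IsBVPSolution n a b E V A₁ A₂ B₁ B₂ y y₁ →
        IsBVPSolution n a b E V A₁ A₂ B₁ B₂ z z₁ →
        y₁ c = z₁ c → EqOn y z (Icc a b)) ∧
    -- the range of that map is the kernel of Ψ_L(c) - Ψ_R(c)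
    {w : Fin n → ℝ | ∃ y y₁ : ℝ → Fin n → ℝ,
        IsBVPSolution n a b E V A₁ A₂ B₁ B₂ y y₁ ∧ y₁ c = w} =
      {w : Fin n → ℝ |
        (YL c * (YL₁ c)⁻¹ - YR c * (YR₁ c)⁻¹).mulVec w = 0} ∧
    -- multiplicity of E = dimension of the kernel of Ψ_L(c) - Ψ_R(c)
    Module.rank ℝ
        (Submodule.span ℝ {f : Icc a b → Fin n → ℝ |
          ∃ y y₁ : ℝ → Fin n → ℝ,
            IsBVPSolution n a b E V A₁ A₂ B₁ B₂ y y₁ ∧ f = (Icc a b).restrict y}) =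
      Module.rank ℝ
        (LinearMap.ker (YL c * (YL₁ c)⁻¹ - YR c * (YR₁ c)⁻¹).mulVecLin) := by
  classical
  have hMc : Continuous (fun x => V x - E • (1 : Matrix (Fin n) (Fin n) ℝ)) :=
    hVcont.sub continuous_const
  have hdetL : IsUnit (YL₁ c).det := (Matrix.isUnit_iff_isUnit_det _).mp hLc
  have hdetR : IsUnit (YR₁ c).det := (Matrix.isUnit_iff_isUnit_det _).mp hRc
  have hYLv : ∀ (v : Fin n → ℝ) (x : ℝ),
      HasDerivAt (fun t => (YL t).mulVec v) ((YL₁ x).mulVec v) x :=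
    fun v x => aux_hasDerivAt_mulVec (hYL x) v
  have hYRv : ∀ (v : Fin n → ℝ) (x : ℝ),
      HasDerivAt (fun t => (YR t).mulVec v) ((YR₁ x).mulVec v) x :=
    fun v x => aux_hasDerivAt_mulVec (hYR x) v
  have hYL₁v : ∀ (v : Fin n → ℝ) (x : ℝ),
      HasDerivAt (fun t => (YL₁ t).mulVec v)
        ((V x - E • (1 : Matrix (Fin n) (Fin n) ℝ)).mulVec ((YL x).mulVec v)) x := by
    intro v x
    have := aux_hasDerivAt_mulVec (hYL₁ x) v
    rwa [← Matrix.mulVec_mulVec] at this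
  have hYR₁v : ∀ (v : Fin n → ℝ) (x : ℝ),
      HasDerivAt (fun t => (YR₁ t).mulVec v)
        ((V x - E • (1 : Matrix (Fin n) (Fin n) ℝ)).mulVec ((YR x).mulVec v)) x := by
    intro v x
    have := aux_hasDerivAt_mulVec (hYR₁ x) v
    rwa [← Matrix.mulVec_mulVec] at this
  have cancelL : ∀ v : Fin n → ℝ, (YL₁ c)⁻¹.mulVec ((YL₁ c).mulVec v) = v := by
    intro v
    rw [Matrix.mulVec_mulVec, Matrix.nonsing_inv_mul _ hdetL, Matrix.one_mulVec]
  have cancelR : ∀ v : Fin n → ℝ, (YR₁ c)⁻¹.mulVec ((YR₁ c).mulVec v) = v := by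
    intro v
    rw [Matrix.mulVec_mulVec, Matrix.nonsing_inv_mul _ hdetR, Matrix.one_mulVec]
  have cancelL' : ∀ w : Fin n → ℝ, (YL₁ c).mulVec ((YL₁ c)⁻¹.mulVec w) = w := by
    intro w
    rw [Matrix.mulVec_mulVec, Matrix.mul_nonsing_inv _ hdetL, Matrix.one_mulVec]
  have cancelR' : ∀ w : Fin n → ℝ, (YR₁ c).mulVec ((YR₁ c)⁻¹.mulVec w) = w := by
    intro w
    rw [Matrix.mulVec_mulVec, Matrix.mul_nonsing_inv _ hdetR, Matrix.one_mulVec]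
  have leftRep : ∀ y y₁ : ℝ → Fin n → ℝ, (∀ x, HasDerivAt y (y₁ x) x) →
      (∀ x ∈ Icc a b, HasDerivAt y₁
        ((V x - E • (1 : Matrix (Fin n) (Fin n) ℝ)).mulVec (y x)) x) →
      A₁.mulVec (y a) + A₂.mulVec (y₁ a) = 0 →
      ∃ v, ∀ x ∈ Icc a b, y x = (YL x).mulVec v ∧ y₁ x = (YL₁ x).mulVec v := by
    intro y y₁ hy hy₁ hbc
    obtain ⟨v, hv1, hv2⟩ := aux_bc_rep A₁ A₂ hA hArank _ _ hbc
    refine ⟨v, ?_⟩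
    exact aux_ode_unique hab.le ⟨le_refl a, hab.le⟩ hMc hy hy₁
      (fun x => hYLv v x) (fun x _ => hYL₁v v x)
      (by rw [hYLa]; exact hv1) (by rw [hYL₁a, Matrix.neg_mulVec]; exact hv2)
  have rightRep : ∀ y y₁ : ℝ → Fin n → ℝ, (∀ x, HasDerivAt y (y₁ x) x) →
      (∀ x ∈ Icc a b, HasDerivAt y₁
        ((V x - E • (1 : Matrix (Fin n) (Fin n) ℝ)).mulVec (y x)) x) →
      B₁.mulVec (y b) + B₂.mulVec (y₁ b) = 0 →
      ∃ v, ∀ x ∈ Icc a b, y x = (YR x).mulVec v ∧ y₁ x = (YR₁ x).mulVec v := by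
    intro y y₁ hy hy₁ hbc
    obtain ⟨v, hv1, hv2⟩ := aux_bc_rep B₁ B₂ hB hBrank _ _ hbc
    refine ⟨v, ?_⟩
    exact aux_ode_unique hab.le ⟨hab.le, le_refl b⟩ hMc hy hy₁
      (fun x => hYRv v x) (fun x _ => hYR₁v v x)
      (by rw [hYRb]; exact hv1) (by rw [hYR₁b, Matrix.neg_mulVec]; exact hv2)
  have part1 : ∀ y y₁ z z₁ : ℝ → Fin n → ℝ,
      IsBVPSolution n a b E V A₁ A₂ B₁ B₂ y y₁ →
      IsBVPSolution n a b E V A₁ A₂ B₁ B₂ z z₁ →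
      y₁ c = z₁ c → EqOn y z (Icc a b) := by
    intro y y₁ z z₁ hy hz hcc
    obtain ⟨vy, hvy⟩ := leftRep y y₁ hy.1 hy.2.1 hy.2.2.1
    obtain ⟨vz, hvz⟩ := leftRep z z₁ hz.1 hz.2.1 hz.2.2.1
    have h1 : (YL₁ c).mulVec vy = (YL₁ c).mulVec vz := by
      rw [← (hvy c hc).2, ← (hvz c hc).2, hcc]
    have hv : vy = vz := by rw [← cancelL vy, h1, cancelL vz]
    intro x hx
    rw [(hvy x hx).1, (hvz x hx).1, hv]
  have constr : ∀ w : Fin n → ℝ,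
      (YL c * (YL₁ c)⁻¹ - YR c * (YR₁ c)⁻¹).mulVec w = 0 →
      IsBVPSolution n a b E V A₁ A₂ B₁ B₂
        (fun t => (YL t).mulVec ((YL₁ c)⁻¹.mulVec w))
        (fun t => (YL₁ t).mulVec ((YL₁ c)⁻¹.mulVec w)) := by
    intro w hw
    have hΨ : (YL c * (YL₁ c)⁻¹).mulVec w = (YR c * (YR₁ c)⁻¹).mulVec w := by
      rwa [Matrix.sub_mulVec, sub_eq_zero] at hw
    have heq : ∀ x ∈ Icc a b,
        (YL x).mulVec ((YL₁ c)⁻¹.mulVec w) = (YR x).mulVec ((YR₁ c)⁻¹.mulVec w) ∧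
        (YL₁ x).mulVec ((YL₁ c)⁻¹.mulVec w) = (YR₁ x).mulVec ((YR₁ c)⁻¹.mulVec w) := by
      apply aux_ode_unique hab.le hc hMc
        (fun x => hYLv _ x) (fun x _ => hYL₁v _ x)
        (fun x => hYRv _ x) (fun x _ => hYR₁v _ x)
      · rw [Matrix.mulVec_mulVec, Matrix.mulVec_mulVec]
        exact hΨ
      · rw [cancelL', cancelR']
    have bc_calc : ∀ (C₁ C₂ : Matrix (Fin n) (Fin n) ℝ), C₁ * C₂ᵀ = C₂ * C₁ᵀ →
        ∀ v : Fin n → ℝ, C₁.mulVec (C₂ᵀ.mulVec v) + C₂.mulVec ((-C₁ᵀ).mulVec v) = 0 := by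
      intro C₁ C₂ hC v
      rw [Matrix.neg_mulVec, Matrix.mulVec_neg, Matrix.mulVec_mulVec, Matrix.mulVec_mulVec,
        hC, add_neg_cancel]
    refine ⟨fun x => hYLv _ x, fun x _ => hYL₁v _ x, ?_, ?_⟩
    · show A₁.mulVec ((YL a).mulVec ((YL₁ c)⁻¹.mulVec w)) +
        A₂.mulVec ((YL₁ a).mulVec ((YL₁ c)⁻¹.mulVec w)) = 0
      rw [hYLa, hYL₁a]
      exact bc_calc A₁ A₂ hA _
    · have hb' := heq b ⟨hab.le, le_refl b⟩
      show B₁.mulVec ((YL b).mulVec ((YL₁ c)⁻¹.mulVec w)) +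
        B₂.mulVec ((YL₁ b).mulVec ((YL₁ c)⁻¹.mulVec w)) = 0
      rw [hb'.1, hb'.2, hYRb, hYR₁b]
      exact bc_calc B₁ B₂ hB _
  have part2 : {w : Fin n → ℝ | ∃ y y₁ : ℝ → Fin n → ℝ,
      IsBVPSolution n a b E V A₁ A₂ B₁ B₂ y y₁ ∧ y₁ c = w} =
      {w : Fin n → ℝ | (YL c * (YL₁ c)⁻¹ - YR c * (YR₁ c)⁻¹).mulVec w = 0} := by
    ext w
    constructor
    · rintro ⟨y, y₁, hy, rfl⟩
      obtain ⟨vL, hvL⟩ := leftRep y y₁ hy.1 hy.2.1 hy.2.2.1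
      obtain ⟨vR, hvR⟩ := rightRep y y₁ hy.1 hy.2.1 hy.2.2.2
      show (YL c * (YL₁ c)⁻¹ - YR c * (YR₁ c)⁻¹).mulVec (y₁ c) = 0
      have e1 : (YL c * (YL₁ c)⁻¹).mulVec (y₁ c) = y c := by
        rw [(hvL c hc).2, ← Matrix.mulVec_mulVec, cancelL vL, ← (hvL c hc).1]
      have e2 : (YR c * (YR₁ c)⁻¹).mulVec (y₁ c) = y c := by
        rw [(hvR c hc).2, ← Matrix.mulVec_mulVec, cancelR vR, ← (hvR c hc).1]
      rw [Matrix.sub_mulVec, e1, e2, sub_self]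
    · intro hw
      exact ⟨_, _, constr w hw, cancelL' w⟩
  refine ⟨part1, part2, ?_⟩
  set Φf : (Fin n → ℝ) →ₗ[ℝ] (Icc a b → Fin n → ℝ) :=
    (LinearMap.pi (fun x : Icc a b => (YL x.1).mulVecLin)).comp
      ((YL₁ c)⁻¹.mulVecLin) with hΦf
  have hΦapp : ∀ (w : Fin n → ℝ) (x : Icc a b),
      Φf w x = (YL x.1).mulVec ((YL₁ c)⁻¹.mulVec w) := fun w x => rfl
  have hΦinj : Function.Injective Φf := by
    intro w w' hww
    have hg : ∀ t ∈ Icc a b,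
        (fun t => (YL t).mulVec ((YL₁ c)⁻¹.mulVec w)) t =
        (fun t => (YL t).mulVec ((YL₁ c)⁻¹.mulVec w')) t := by
      intro t ht
      have := congrFun hww ⟨t, ht⟩
      rw [hΦapp, hΦapp] at this
      exact this
    have h1 : HasDerivWithinAt (fun t => (YL t).mulVec ((YL₁ c)⁻¹.mulVec w)) w
        (Icc a b) c := by
      have hd := hYLv ((YL₁ c)⁻¹.mulVec w) c
      rw [cancelL'] at hd
      exact hd.hasDerivWithinAt
    have h2' : HasDerivWithinAt (fun t => (YL t).mulVec ((YL₁ c)⁻¹.mulVec w')) w'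
        (Icc a b) c := by
      have hd := hYLv ((YL₁ c)⁻¹.mulVec w') c
      rw [cancelL'] at hd
      exact hd.hasDerivWithinAt
    have h2 : HasDerivWithinAt (fun t => (YL t).mulVec ((YL₁ c)⁻¹.mulVec w)) w'
        (Icc a b) c := h2'.congr hg (hg c hc)
    have u1 := h1.derivWithin (uniqueDiffOn_Icc hab c hc)
    have u2 := h2.derivWithin (uniqueDiffOn_Icc hab c hc)
    rw [← u1, u2]
  have hSet : {f : Icc a b → Fin n → ℝ | ∃ y y₁ : ℝ → Fin n → ℝ,
        IsBVPSolution n a b E V A₁ A₂ B₁ B₂ y y₁ ∧ f = (Icc a b).restrict y} =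
      Φf '' {w : Fin n → ℝ | (YL c * (YL₁ c)⁻¹ - YR c * (YR₁ c)⁻¹).mulVec w = 0} := by
    ext f
    constructor
    · rintro ⟨y, y₁, hy, rfl⟩
      refine ⟨y₁ c, ?_, ?_⟩
      · have hmem : y₁ c ∈ {w : Fin n → ℝ | ∃ y y₁ : ℝ → Fin n → ℝ,
            IsBVPSolution n a b E V A₁ A₂ B₁ B₂ y y₁ ∧ y₁ c = w} := ⟨y, y₁, hy, rfl⟩
        rw [part2] at hmem
        exact hmem
      · obtain ⟨vL, hvL⟩ := leftRep y y₁ hy.1 hy.2.1 hy.2.2.1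
        funext x
        rw [hΦapp]
        have hvc : (YL₁ c)⁻¹.mulVec (y₁ c) = vL := by rw [(hvL c hc).2, cancelL]
        rw [hvc]; exact (hvL x.1 x.2).1.symm
    · rintro ⟨w, hw, rfl⟩
      refine ⟨_, _, constr w hw, ?_⟩
      funext x
      rw [hΦapp]
      rfl
  rw [hSet, Submodule.span_image]
  have hker : Submodule.span ℝ
      {w : Fin n → ℝ | (YL c * (YL₁ c)⁻¹ - YR c * (YR₁ c)⁻¹).mulVec w = 0} =
      LinearMap.ker (YL c * (YL₁ c)⁻¹ - YR c * (YR₁ c)⁻¹).mulVecLin := by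
    have hs : {w : Fin n → ℝ | (YL c * (YL₁ c)⁻¹ - YR c * (YR₁ c)⁻¹).mulVec w = 0} =
        (LinearMap.ker (YL c * (YL₁ c)⁻¹ - YR c * (YR₁ c)⁻¹).mulVecLin : Set (Fin n → ℝ)) := by
      ext w
      simp [LinearMap.mem_ker, Matrix.sub_mulVec]
    rw [hs, Submodule.span_eq]
  rw [hker]
  exact ((Submodule.equivMapOfInjective Φf hΦinj _).rank_eq).symm
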